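/- For positive reals μ₁,...,μₙ and real p ≥ 1, the quantity gain(p) := n·(Σᵢ μᵢ^{2(p-1)}) / (Σᵢ μᵢ^{p-1})² is monotone nondecreasing in p; moreover if the μᵢ are not all equal, gain is strictly increasing in p. -/

import Mathlib

open Finset

private lemma aux_sym {n : ℕ} (f L : Fin n → ℝ) :
    2 * (∑ i, ∑ j, f i ^ 2 * f j * (L i - L j)) =
      ∑ i, ∑ j, f i * f j * (f i - f j) * (L i - L j) := by
  have hswap : (∑ i, ∑ j, f i ^ 2 * f j * (L i - L j)) =
      ∑ i, ∑ j, f j ^ 2 * f i * (L j - L i) :=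
    Finset.sum_comm
  calc 2 * (∑ i, ∑ j, f i ^ 2 * f j * (L i - L j))
      = (∑ i, ∑ j, f i ^ 2 * f j * (L i - L j)) +
        ∑ i, ∑ j, f j ^ 2 * f i * (L j - L i) := by rw [two_mul, hswap]
    _ = ∑ i, ∑ j, (f i ^ 2 * f j * (L i - L j) + f j ^ 2 * f i * (L j - L i)) := by
        rw [← Finset.sum_add_distrib]
        exact Finset.sum_congr rfl fun i _ => (Finset.sum_add_distrib).symm
    _ = ∑ i, ∑ j, f i * f j * (f i - f j) * (L i - L j) := by
        refine Finset.sum_congr rfl fun i _ => Finset.sum_congr rfl fun j _ => by ring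

/-- For positive reals `μ i` the gain `p ↦ n * (∑ μᵢ^(2(p-1))) / (∑ μᵢ^(p-1))²`
is monotone nondecreasing on `[1, ∞)`, and strictly increasing if the `μ i`
are not all equal. -/
theorem gain_monotone (n : ℕ) (hn : 1 ≤ n) (μ : Fin n → ℝ) (hμ : ∀ i, 0 < μ i)
    (gain : ℝ → ℝ)
    (hgain : ∀ p, gain p =
      n * (∑ i, μ i ^ (2 * (p - 1))) / (∑ i, μ i ^ (p - 1)) ^ 2) :
    (∀ p q, 1 ≤ p → p ≤ q → gain p ≤ gain q) ∧
    ((∃ i j, μ i ≠ μ j) → ∀ p q, 1 ≤ p → p < q → gain p < gain q) := by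
  haveI : Nonempty (Fin n) := ⟨⟨0, hn⟩⟩
  set G : ℝ → ℝ := fun p => n * (∑ i, μ i ^ (2 * (p - 1))) / (∑ i, μ i ^ (p - 1)) ^ 2
    with hGdef
  set N : ℝ → ℝ := fun p => ∑ i, μ i ^ (2 * (p - 1)) with hNdef
  set D : ℝ → ℝ := fun p => ∑ i, μ i ^ (p - 1) with hDdef
  set N' : ℝ → ℝ := fun p => ∑ i, μ i ^ (2 * (p - 1)) * Real.log (μ i) * 2 with hN'def
  set D' : ℝ → ℝ := fun p => ∑ i, μ i ^ (p - 1) * Real.log (μ i) with hD'def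
  have hDpos : ∀ p, 0 < D p := fun p =>
    Finset.sum_pos (fun i _ => Real.rpow_pos_of_pos (hμ i) _) Finset.univ_nonempty
  have hNpos : ∀ p, 0 < N p := fun p =>
    Finset.sum_pos (fun i _ => Real.rpow_pos_of_pos (hμ i) _) Finset.univ_nonempty
  -- derivatives of the sums
  have hDeriv : ∀ (c : ℝ) (p : ℝ), HasDerivAt (fun p => ∑ i, μ i ^ (c * (p - 1)))
      (∑ i, μ i ^ (c * (p - 1)) * Real.log (μ i) * c) p := by
    intro c p
    apply HasDerivAt.fun_sum
    intro i _
    have h1 : HasDerivAt (fun p : ℝ => c * (p - 1)) c p := by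
      simpa using ((hasDerivAt_id p).sub_const 1).const_mul c
    have h2 := (Real.hasStrictDerivAt_const_rpow (hμ i) (c * (p - 1))).hasDerivAt
    have h3 := h2.comp p h1
    exact h3
  have hNderiv : ∀ p, HasDerivAt N (N' p) p := fun p => hDeriv 2 p
  have hDderiv : ∀ p, HasDerivAt D (D' p) p := by
    intro p
    have h := hDeriv 1 p
    simp only [one_mul, mul_one] at h
    exact h
  -- derivative of G
  set E : ℝ → ℝ := fun p =>
    ((n : ℝ) * N' p * D p ^ 2 - (n : ℝ) * N p * (2 * D p ^ 1 * D' p)) / (D p ^ 2) ^ 2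
    with hEdef
  have hGderiv : ∀ p, HasDerivAt G (E p) p := by
    intro p
    have hnum : HasDerivAt (fun p => (n : ℝ) * N p) ((n : ℝ) * N' p) p :=
      (hNderiv p).const_mul _
    have hden : HasDerivAt (fun p => D p ^ 2) (2 * D p ^ 1 * D' p) p := by
      have := (hDderiv p).fun_pow 2
      simpa using this
    have hden0 : D p ^ 2 ≠ 0 := pow_ne_zero 2 (hDpos p).ne'
    exact hnum.div hden hden0
  -- the key sign quantity
  set T : ℝ → ℝ := fun p => ∑ i, ∑ j,
    μ i ^ (p - 1) * μ j ^ (p - 1) * (μ i ^ (p - 1) - μ j ^ (p - 1)) *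
      (Real.log (μ i) - Real.log (μ j)) with hTdef
  have hsq : ∀ (i : Fin n) (p : ℝ), μ i ^ (2 * (p - 1)) = (μ i ^ (p - 1)) ^ 2 := by
    intro i p
    rw [mul_comm, Real.rpow_mul (hμ i).le, Real.rpow_two]
  have hKT : ∀ p, N' p * D p - 2 * (N p * D' p) = T p := by
    intro p
    have haux := aux_sym (fun i => μ i ^ (p - 1)) (fun i => Real.log (μ i))
    simp only [hTdef]
    rw [← haux]
    have e1 : N' p * D p = ∑ i, ∑ j,
        (μ i ^ (2 * (p - 1)) * Real.log (μ i) * 2) * μ j ^ (p - 1) :=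
      Finset.sum_mul_sum _ _ _ _
    have e2 : N p * D' p = ∑ i, ∑ j,
        μ i ^ (2 * (p - 1)) * (μ j ^ (p - 1) * Real.log (μ j)) :=
      Finset.sum_mul_sum _ _ _ _
    rw [e1, e2]
    simp only [Finset.mul_sum]
    rw [← Finset.sum_sub_distrib]
    refine Finset.sum_congr rfl fun i _ => ?_
    rw [← Finset.sum_sub_distrib]
    refine Finset.sum_congr rfl fun j _ => ?_
    rw [hsq i p]
    ring
  have hTnonneg : ∀ p, 1 ≤ p → 0 ≤ T p := by
    intro p hp
    refine Finset.sum_nonneg fun i _ => Finset.sum_nonneg fun j _ => ?_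
    have ht : (0 : ℝ) ≤ p - 1 := by linarith
    rcases le_total (μ i) (μ j) with h | h
    · have h1 : μ i ^ (p - 1) ≤ μ j ^ (p - 1) := Real.rpow_le_rpow (hμ i).le h ht
      have h2 : Real.log (μ i) ≤ Real.log (μ j) := Real.log_le_log (hμ i) h
      have := mul_nonneg (neg_nonneg.2 (sub_nonpos.2 h1)) (neg_nonneg.2 (sub_nonpos.2 h2))
      rw [neg_mul_neg] at this
      calc (0:ℝ) ≤ (μ i ^ (p - 1) * μ j ^ (p - 1)) *
            ((μ i ^ (p - 1) - μ j ^ (p - 1)) * (Real.log (μ i) - Real.log (μ j))) :=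
            mul_nonneg (mul_nonneg (Real.rpow_pos_of_pos (hμ i) _).le
              (Real.rpow_pos_of_pos (hμ j) _).le) this
        _ = _ := by ring
    · have h1 : μ j ^ (p - 1) ≤ μ i ^ (p - 1) := Real.rpow_le_rpow (hμ j).le h ht
      have h2 : Real.log (μ j) ≤ Real.log (μ i) := Real.log_le_log (hμ j) h
      have := mul_nonneg (sub_nonneg.mpr h1) (sub_nonneg.mpr h2)
      calc (0:ℝ) ≤ (μ i ^ (p - 1) * μ j ^ (p - 1)) *
            ((μ i ^ (p - 1) - μ j ^ (p - 1)) * (Real.log (μ i) - Real.log (μ j))) :=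
            mul_nonneg (mul_nonneg (Real.rpow_pos_of_pos (hμ i) _).le
              (Real.rpow_pos_of_pos (hμ j) _).le) this
        _ = _ := by ring
  have hTpos : (∃ i j, μ i ≠ μ j) → ∀ p, 1 < p → 0 < T p := by
    rintro ⟨i, j, hij⟩ p hp
    have ht : (0 : ℝ) < p - 1 := by linarith
    have hterm : ∀ a b : Fin n, μ a ≠ μ b →
        0 < μ a ^ (p - 1) * μ b ^ (p - 1) * (μ a ^ (p - 1) - μ b ^ (p - 1)) *
          (Real.log (μ a) - Real.log (μ b)) := by
      intro a b hab
      rcases lt_or_gt_of_ne hab with h | h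
      · have h1 : μ a ^ (p - 1) < μ b ^ (p - 1) := Real.rpow_lt_rpow (hμ a).le h ht
        have h2 : Real.log (μ a) < Real.log (μ b) := Real.log_lt_log (hμ a) h
        have := mul_pos_of_neg_of_neg (sub_neg.mpr h1) (sub_neg.mpr h2)
        calc (0:ℝ) < (μ a ^ (p - 1) * μ b ^ (p - 1)) *
              ((μ a ^ (p - 1) - μ b ^ (p - 1)) * (Real.log (μ a) - Real.log (μ b))) :=
              mul_pos (mul_pos (Real.rpow_pos_of_pos (hμ a) _)
                (Real.rpow_pos_of_pos (hμ b) _)) this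
          _ = _ := by ring
      · have h1 : μ b ^ (p - 1) < μ a ^ (p - 1) := Real.rpow_lt_rpow (hμ b).le h ht
        have h2 : Real.log (μ b) < Real.log (μ a) := Real.log_lt_log (hμ b) h
        have := mul_pos (sub_pos.mpr h1) (sub_pos.mpr h2)
        calc (0:ℝ) < (μ a ^ (p - 1) * μ b ^ (p - 1)) *
              ((μ a ^ (p - 1) - μ b ^ (p - 1)) * (Real.log (μ a) - Real.log (μ b))) :=
              mul_pos (mul_pos (Real.rpow_pos_of_pos (hμ a) _)
                (Real.rpow_pos_of_pos (hμ b) _)) this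
          _ = _ := by ring
    have hinner : ∀ a : Fin n, (0:ℝ) ≤ ∑ b, μ a ^ (p - 1) * μ b ^ (p - 1) *
        (μ a ^ (p - 1) - μ b ^ (p - 1)) * (Real.log (μ a) - Real.log (μ b)) := by
      intro a
      refine Finset.sum_nonneg fun b _ => ?_
      rcases eq_or_ne (μ a) (μ b) with h | h
      · simp [h]
      · exact (hterm a b h).le
    refine Finset.sum_pos' (fun a _ => hinner a) ⟨i, Finset.mem_univ i, ?_⟩
    refine Finset.sum_pos' (fun b _ => ?_) ⟨j, Finset.mem_univ j, hterm i j hij⟩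
    rcases eq_or_ne (μ i) (μ b) with h | h
    · simp [h]
    · exact (hterm i b h).le
  -- sign of the derivative
  have hEeq : ∀ p, E p = (n : ℝ) * D p *
      (N' p * D p - 2 * (N p * D' p)) / (D p ^ 2) ^ 2 := by
    intro p
    simp only [hEdef]
    ring
  have hEnonneg : ∀ p, 1 ≤ p → 0 ≤ E p := by
    intro p hp
    rw [hEeq p]
    apply div_nonneg _ (sq_nonneg (D p ^ 2))
    have h1 := hTnonneg p hp
    rw [← hKT p] at h1
    have hn0 : (0:ℝ) ≤ (n : ℝ) * D p :=
      mul_nonneg (Nat.cast_nonneg n) (hDpos p).le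
    exact mul_nonneg hn0 h1
  have hEpos : (∃ i j, μ i ≠ μ j) → ∀ p, 1 < p → 0 < E p := by
    intro hne p hp
    rw [hEeq p]
    apply div_pos _ (pow_pos (pow_pos (hDpos p) 2) 2)
    have h1 := hTpos hne p hp
    rw [← hKT p] at h1
    have hnn : (0:ℝ) < (n:ℝ) := by exact_mod_cast hn
    exact mul_pos (mul_pos hnn (hDpos p)) h1
  have hGdiff : Differentiable ℝ G := fun p => (hGderiv p).differentiableAt
  have hcont : ContinuousOn G (Set.Ici 1) := hGdiff.continuous.continuousOn
  constructor
  · intro p q hp hpq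
    rw [hgain p, hgain q]
    have hmono : MonotoneOn G (Set.Ici (1:ℝ)) := by
      refine monotoneOn_of_deriv_nonneg (convex_Ici 1) hcont
        (fun x _ => (hGdiff x).differentiableWithinAt) ?_
      intro x hx
      rw [interior_Ici] at hx
      rw [(hGderiv x).deriv]
      exact hEnonneg x (le_of_lt hx)
    exact hmono hp (le_trans hp hpq) hpq
  · intro hne p q hp hpq
    rw [hgain p, hgain q]
    have hstrict : StrictMonoOn G (Set.Ici (1:ℝ)) := by
      refine strictMonoOn_of_deriv_pos (convex_Ici 1) hcont ?_
      intro x hx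
      rw [interior_Ici] at hx
      rw [(hGderiv x).deriv]
      exact hEpos hne x hx
    exact hstrict hp (le_trans hp hpq.le) hpq
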